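/- Consider an MMSM instance and D ≥ 0. Suppose that for each sensor i with |yᵢ| ≤ D there is a Lebesgue-measurable set Aᵢ ⊆ [lᵢ(D), gᵢ(D)] ∩ [0, M] with Lebesgue measure at most 2rᵢ, such that the union of all the sets Aᵢ contains [0, M]. Then the instance is feasible with respect to D + r_max, where r_max = maxᵢ rᵢ. -/

import Mathlib

open MeasureTheory

/-- Leftmost point of the barrier coverable by a sensor at `(x, y)` with radius `r`
under movement bound `D`. -/
noncomputable def lpos (x y r D : ℝ) : ℝ := x - Real.sqrt (D ^ 2 - y ^ 2) - r

/-- Rightmost point of the barrier coverable by a sensor at `(x, y)` with radius `r`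
under movement bound `D`. -/
noncomputable def gpos (x y r D : ℝ) : ℝ := x + Real.sqrt (D ^ 2 - y ^ 2) + r

/-- The MMSM instance with sensors at `(x i, y i)` of radii `r i` and barrier `[0, M]`
is feasible with respect to movement bound `D`. -/
def Feasible {n : ℕ} (x y r : Fin n → ℝ) (M D : ℝ) : Prop :=
  ∃ (T : Finset (Fin n)) (p : Fin n → ℝ),
    (∀ i ∈ T, Real.sqrt ((x i - p i) ^ 2 + (y i) ^ 2) ≤ D) ∧
    ∀ q ∈ Set.Icc (0 : ℝ) M, ∃ i ∈ T, |q - p i| ≤ r i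

set_option maxHeartbeats 2000000 in
/-- The core greedy covering lemma.  `W` is the part of the barrier already dealt with
(the union of the witness sets of already-placed sensors); `S` is the set of remaining
sensors.  The long existential hypothesis is the greedy invariant: for every remaining
sensor with positive residual measure there is an "era" certificate bounding how much
measure can accumulate before that sensor gets placed. -/
lemma mmsm_core {n : ℕ} (x y r : Fin n → ℝ) (M D rmax : ℝ)
    (hr : ∀ i, 0 < r i) (hD : 0 ≤ D) (hrm0 : 0 < rmax) (hrub : ∀ i, r i ≤ rmax)
    (A : Fin n → Set ℝ) :
    ∀ (k : ℕ) (S : Finset (Fin n)) (W : Set ℝ),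
      S.card ≤ k →
      (∀ j ∈ S, |y j| ≤ D) →
      MeasurableSet W →
      W ⊆ Set.Icc 0 M →
      (∀ j ∈ S, MeasurableSet (A j)) →
      (∀ j ∈ S, A j ⊆ Set.Icc (lpos (x j) (y j) (r j) D) (gpos (x j) (y j) (r j) D) ∩
        Set.Icc 0 M) →
      (∀ j ∈ S, volume (A j) ≤ ENNReal.ofReal (2 * r j)) →
      (Set.Icc (0:ℝ) M ⊆ W ∪ ⋃ j ∈ S, A j) →
      (∀ j ∈ S, 0 < volume (A j \ W) →
        ∃ V σ, MeasurableSet V ∧ V ⊆ W ∧ -rmax ≤ σ ∧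
          volume V ≤ ENNReal.ofReal (σ + 2 * rmax) ∧
          (W \ V ⊆ Set.Icc (max (σ + rmax) 0) (min (gpos (x j) (y j) (r j) D) M)) ∧
          (∀ u ∈ S, 0 < volume (A u \ W) →
            gpos (x u) (y u) (r u) D ≤ gpos (x j) (y j) (r j) D →
            max (σ + rmax) 0 ≤ max (lpos (x u) (y u) (r u) D) 0)) →
      (volume W).toReal < M →
      ∃ (T : Finset (Fin n)) (p : Fin n → ℝ), T ⊆ S ∧
        (∀ i ∈ T, Real.sqrt ((x i - p i) ^ 2 + (y i) ^ 2) ≤ D + rmax) ∧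
        (∀ q ∈ Set.Icc ((volume W).toReal) M, ∃ i ∈ T, |q - p i| ≤ r i) := by
  intro k
  induction k with
  | zero =>
    intro S W hcard hSy hWm hWsub hAm hAsub hAvol hcov hINV hT
    have hS : S = ∅ := Finset.card_eq_zero.mp (Nat.le_zero.mp hcard)
    subst hS
    exfalso
    have hsub : Set.Icc (0:ℝ) M ⊆ W := by
      intro q hq
      rcases hcov hq with h | h
      · exact h
      · obtain ⟨j, hj, -⟩ := Set.mem_iUnion₂.mp h
        exact absurd hj (Finset.notMem_empty j)
    have h1 : ENNReal.ofReal M ≤ volume W := by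
      have := measure_mono (μ := volume) hsub
      rwa [Real.volume_Icc, sub_zero] at this
    have hWfin : volume W ≠ ⊤ := by
      have := measure_mono (μ := volume) hWsub
      rw [Real.volume_Icc, sub_zero] at this
      exact (this.trans_lt ENNReal.ofReal_lt_top).ne
    have h2 : M ≤ (volume W).toReal := by
      have h3 := (ENNReal.toReal_le_toReal (by simp) hWfin).mpr h1
      rwa [ENNReal.toReal_ofReal
        (by linarith [ENNReal.toReal_nonneg (a := volume W)])] at h3
    linarith
  | succ k ih =>
    intro S W hcard hSy hWm hWsub hAm hAsub hAvol hcov hINV hT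
    set t := (volume W).toReal with ht_def
    have ht0 : 0 ≤ t := ENNReal.toReal_nonneg
    have hWfin : volume W ≠ ⊤ := by
      have := measure_mono (μ := volume) hWsub
      rw [Real.volume_Icc, sub_zero] at this
      exact (this.trans_lt ENNReal.ofReal_lt_top).ne
    have hWvol : volume W = ENNReal.ofReal t := (ENNReal.ofReal_toReal hWfin).symm
    -- Step 1: there exists a candidate: positive residual and lpos ≤ t + rmax
    have hCex : ∃ j ∈ S, 0 < volume (A j \ W) ∧
        lpos (x j) (y j) (r j) D ≤ t + rmax := by
      by_contra hno
      push_neg at hno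
      set N : Set ℝ := ⋃ j ∈ S.filter (fun j => volume (A j \ W) = 0), (A j \ W) with hN
      have hsub : Set.Icc (0:ℝ) M ⊆ (W ∪ N) ∪ Set.Ioc (t + rmax) M := by
        intro q hq
        rcases hcov hq with h | h
        · exact Or.inl (Or.inl h)
        · obtain ⟨j, hjS, hqA⟩ := Set.mem_iUnion₂.mp h
          by_cases hqW : q ∈ W
          · exact Or.inl (Or.inl hqW)
          rcases eq_or_lt_of_le (show (0:ENNReal) ≤ volume (A j \ W) from zero_le) with hz | hpos
          · refine Or.inl (Or.inr ?_)
            refine Set.mem_iUnion₂.mpr ⟨j, Finset.mem_filter.mpr ⟨hjS, hz.symm⟩, hqA, hqW⟩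
          · have hl := hno j hjS hpos
            have hql : lpos (x j) (y j) (r j) D ≤ q := ((hAsub j hjS hqA).1).1
            exact Or.inr ⟨lt_of_lt_of_le hl hql, hq.2⟩
      have hNnull : volume N = 0 := by
        refine le_antisymm ?_ zero_le
        calc volume N ≤ ∑ j ∈ S.filter (fun j => volume (A j \ W) = 0), volume (A j \ W) :=
              measure_biUnion_finset_le (μ := volume) _ _
        _ = 0 := Finset.sum_eq_zero (fun j hj => (Finset.mem_filter.mp hj).2)
      have hMle : ENNReal.ofReal M ≤ ENNReal.ofReal t + ENNReal.ofReal (M - (t + rmax)) := by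
        calc ENNReal.ofReal M = volume (Set.Icc (0:ℝ) M) := by rw [Real.volume_Icc, sub_zero]
        _ ≤ volume ((W ∪ N) ∪ Set.Ioc (t + rmax) M) := measure_mono hsub
        _ ≤ volume (W ∪ N) + volume (Set.Ioc (t + rmax) M) := measure_union_le _ _
        _ ≤ (volume W + volume N) + volume (Set.Ioc (t + rmax) M) := by
              gcongr; exact measure_union_le _ _
        _ = ENNReal.ofReal t + ENNReal.ofReal (M - (t + rmax)) := by
              rw [hNnull, add_zero, hWvol, Real.volume_Ioc]
      by_cases hcase : M - (t + rmax) ≤ 0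
      · rw [ENNReal.ofReal_eq_zero.mpr hcase, add_zero] at hMle
        have : M ≤ t := (ENNReal.ofReal_le_ofReal_iff ht0).mp hMle
        linarith
      · push_neg at hcase
        rw [← ENNReal.ofReal_add ht0 (by linarith)] at hMle
        have : M ≤ t + (M - (t + rmax)) :=
          (ENNReal.ofReal_le_ofReal_iff (by linarith)).mp hMle
        linarith
    -- Step 2: choose candidate with minimal gpos
    set C : Finset (Fin n) := S.filter
      (fun j => 0 < volume (A j \ W) ∧ lpos (x j) (y j) (r j) D ≤ t + rmax) with hC
    have hCne : C.Nonempty := by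
      obtain ⟨j, hjS, h1, h2⟩ := hCex
      exact ⟨j, Finset.mem_filter.mpr ⟨hjS, h1, h2⟩⟩
    obtain ⟨i, hiC, hgmin⟩ := C.exists_min_image (fun j => gpos (x j) (y j) (r j) D) hCne
    have hiS : i ∈ S := (Finset.mem_filter.mp hiC).1
    have hipos : 0 < volume (A i \ W) := (Finset.mem_filter.mp hiC).2.1
    have hil : lpos (x i) (y i) (r i) D ≤ t + rmax := (Finset.mem_filter.mp hiC).2.2
    -- Step 3: invariant at i gives the key upper bound on the new frontier
    obtain ⟨V, σ, hVm, hVW, hσlb, hVvol, hWV, hii⟩ := hINV i hiS hipos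
    have hAiW : A i \ W ⊆
        Set.Icc (max (σ + rmax) 0) (min (gpos (x i) (y i) (r i) D) M) := by
      intro q hq
      have h1 := (hAsub i hiS hq.1).1
      have h2 := (hAsub i hiS hq.1).2
      exact ⟨le_trans (hii i hiS hipos le_rfl) (max_le h1.1 h2.1), le_min h1.2 h2.2⟩
    set W' := W ∪ A i with hW'_def
    have hAiWm : MeasurableSet (A i \ W) := (hAm i hiS).diff hWm
    have hW'm : MeasurableSet W' := hWm.union (hAm i hiS)
    have hW'sub : W' ⊆ Set.Icc 0 M := by
      intro q hq
      rcases hq with h | h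
      · exact hWsub h
      · exact (hAsub i hiS h).2
    have hW'fin : volume W' ≠ ⊤ := by
      have := measure_mono (μ := volume) hW'sub
      rw [Real.volume_Icc, sub_zero] at this
      exact (this.trans_lt ENNReal.ofReal_lt_top).ne
    set t' := (volume W').toReal with ht'_def
    have htt' : t ≤ t' :=
      (ENNReal.toReal_le_toReal hWfin hW'fin).mpr (measure_mono Set.subset_union_left)
    have ht'M : t' ≤ M := by
      have h1 : volume W' ≤ ENNReal.ofReal M := by
        have := measure_mono (μ := volume) hW'sub
        rwa [Real.volume_Icc, sub_zero] at this
      exact ENNReal.toReal_le_of_le_ofReal (by linarith) h1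
    have hW'le : volume W' ≤ volume W + volume (A i \ W) := by
      calc volume W' = volume (W ∪ (A i \ W)) := by rw [Set.union_diff_self]
      _ ≤ _ := measure_union_le _ _
    -- slot length bound
    have hslot : t' ≤ t + 2 * r i := by
      have h2 : volume W' ≤ ENNReal.ofReal (t + 2 * r i) := by
        calc volume W' ≤ volume W + volume (A i \ W) := hW'le
        _ ≤ ENNReal.ofReal t + ENNReal.ofReal (2 * r i) := by
              rw [hWvol]
              gcongr
              exact (measure_mono Set.diff_subset).trans (hAvol i hiS)
        _ = ENNReal.ofReal (t + 2 * r i) := (ENNReal.ofReal_add ht0 (by linarith [hr i])).symm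
      exact ENNReal.toReal_le_of_le_ofReal (by linarith [hr i]) h2
    -- Claim (A): t' ≤ gpos i + rmax
    have hlohi : max (σ + rmax) 0 ≤ min (gpos (x i) (y i) (r i) D) M := by
      by_contra hcon
      push_neg at hcon
      have hsub0 : A i \ W ⊆ (∅ : Set ℝ) := by
        rw [← Set.Icc_eq_empty (not_le.mpr hcon)]
        exact hAiW
      have h0 : volume (A i \ W) = 0 :=
        le_antisymm (by simpa using measure_mono (μ := volume) hsub0) zero_le
      exact hipos.ne' h0
    have htA : t' ≤ gpos (x i) (y i) (r i) D + rmax := by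
      have hsub2 : W' ⊆ V ∪ ((W \ V) ∪ (A i \ W)) := by
        intro q hq
        rcases hq with h | h
        · by_cases hv : q ∈ V
          · exact Or.inl hv
          · exact Or.inr (Or.inl ⟨h, hv⟩)
        · by_cases hw : q ∈ W
          · by_cases hv : q ∈ V
            · exact Or.inl hv
            · exact Or.inr (Or.inl ⟨hw, hv⟩)
          · exact Or.inr (Or.inr ⟨h, hw⟩)
      have hsub3 : (W \ V) ∪ (A i \ W) ⊆
          Set.Icc (max (σ + rmax) 0) (min (gpos (x i) (y i) (r i) D) M) :=
        Set.union_subset hWV hAiW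
      have h1 : volume W' ≤ ENNReal.ofReal (σ + 2 * rmax) +
          ENNReal.ofReal (min (gpos (x i) (y i) (r i) D) M - max (σ + rmax) 0) := by
        calc volume W' ≤ volume V + volume ((W \ V) ∪ (A i \ W)) :=
              (measure_mono hsub2).trans (measure_union_le _ _)
        _ ≤ ENNReal.ofReal (σ + 2 * rmax) +
              volume (Set.Icc (max (σ + rmax) 0) (min (gpos (x i) (y i) (r i) D) M)) :=
              add_le_add hVvol (measure_mono hsub3)
        _ = _ := by rw [Real.volume_Icc]
      rw [← ENNReal.ofReal_add (by linarith) (by linarith)] at h1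
      have h2 := ENNReal.toReal_le_of_le_ofReal (by linarith) h1
      have h3 : σ + rmax ≤ max (σ + rmax) 0 := le_max_left _ _
      have h4 : min (gpos (x i) (y i) (r i) D) M ≤ gpos (x i) (y i) (r i) D :=
        min_le_left _ _
      linarith
    -- Step 4: the placement of sensor i
    have hyD : |y i| ≤ D := hSy i hiS
    have hsi0 : 0 ≤ Real.sqrt (D ^ 2 - (y i) ^ 2) := Real.sqrt_nonneg _
    have hsiD : Real.sqrt (D ^ 2 - (y i) ^ 2) ≤ D := by
      have h1 : D ^ 2 - (y i) ^ 2 ≤ D ^ 2 := by nlinarith [sq_nonneg (y i)]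
      calc Real.sqrt (D ^ 2 - (y i) ^ 2) ≤ Real.sqrt (D ^ 2) := Real.sqrt_le_sqrt h1
      _ = D := Real.sqrt_sq hD
    have hsisq : Real.sqrt (D ^ 2 - (y i) ^ 2) ^ 2 = D ^ 2 - (y i) ^ 2 := by
      apply Real.sq_sqrt
      nlinarith [sq_abs (y i), abs_nonneg (y i)]
    set pi := max (t' - r i) (x i - Real.sqrt (D ^ 2 - (y i) ^ 2) - rmax) with hpi_def
    have hpil : t' - r i ≤ pi := by rw [hpi_def]; exact le_max_left _ _
    have hpir : x i - Real.sqrt (D ^ 2 - (y i) ^ 2) - rmax ≤ pi := by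
      rw [hpi_def]; exact le_max_right _ _
    have hgiu : gpos (x i) (y i) (r i) D = x i + Real.sqrt (D ^ 2 - (y i) ^ 2) + r i := rfl
    have hliu : lpos (x i) (y i) (r i) D = x i - Real.sqrt (D ^ 2 - (y i) ^ 2) - r i := rfl
    have hpimax : pi ≤ x i + Real.sqrt (D ^ 2 - (y i) ^ 2) + rmax := by
      rw [hpi_def]
      apply max_le
      · rw [hgiu] at htA; linarith
      · linarith
    have hmove : Real.sqrt ((x i - pi) ^ 2 + (y i) ^ 2) ≤ D + rmax := by
      have habs : |x i - pi| ≤ Real.sqrt (D ^ 2 - (y i) ^ 2) + rmax := by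
        rw [abs_le]
        constructor
        · linarith
        · linarith
      have hsq : (x i - pi) ^ 2 + (y i) ^ 2 ≤ (D + rmax) ^ 2 := by
        nlinarith [sq_abs (x i - pi), abs_nonneg (x i - pi), hsisq, hsiD, hsi0]
      calc Real.sqrt ((x i - pi) ^ 2 + (y i) ^ 2) ≤ Real.sqrt ((D + rmax) ^ 2) :=
            Real.sqrt_le_sqrt hsq
      _ = D + rmax := Real.sqrt_sq (by linarith)
    have hslotcov : ∀ q ∈ Set.Icc t t', |q - pi| ≤ r i := by
      intro q hq
      rw [hliu] at hil
      rw [abs_le]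
      constructor
      · -- -(r i) ≤ q - pi, i.e. pi ≤ q + r i
        have h2 : pi ≤ q + r i := by
          rw [hpi_def]
          apply max_le
          · linarith [hq.1, hq.2, hslot]
          · linarith [hq.1, hr i]
        linarith
      · linarith [hq.2, hpil]
    -- Step 5: either done, or recurse
    by_cases hter : t' < M
    · -- recurse on S.erase i, W'
      have hcard' : (S.erase i).card ≤ k := by
        rw [Finset.card_erase_of_mem hiS]
        omega
      have hrec := ih (S.erase i) W' hcard'
        (fun j hj => hSy j (Finset.mem_of_mem_erase hj))
        hW'm hW'sub
        (fun j hj => hAm j (Finset.mem_of_mem_erase hj))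
        (fun j hj => hAsub j (Finset.mem_of_mem_erase hj))
        (fun j hj => hAvol j (Finset.mem_of_mem_erase hj))
        ?_ ?_ (by rw [← ht'_def]; exact hter)
      · obtain ⟨T0, p0, hT0sub, hmov0, hcov0⟩ := hrec
        refine ⟨insert i T0, Function.update p0 i pi, ?_, ?_, ?_⟩
        · intro j hj
          rcases Finset.mem_insert.mp hj with h | h
          · exact h ▸ hiS
          · exact Finset.mem_of_mem_erase (hT0sub h)
        · intro j hj
          rcases Finset.mem_insert.mp hj with h | h
          · subst h; rw [Function.update_self]; exact hmove
          · have hne : j ≠ i := Finset.ne_of_mem_erase (hT0sub h)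
            rw [Function.update_of_ne hne]
            exact hmov0 j h
        · intro q hq
          by_cases hqt : q ≤ t'
          · refine ⟨i, Finset.mem_insert_self _ _, ?_⟩
            rw [Function.update_self]
            exact hslotcov q ⟨hq.1, hqt⟩
          · push_neg at hqt
            obtain ⟨j, hjT, hjq⟩ := hcov0 q ⟨by rw [← ht'_def]; linarith, hq.2⟩
            have hne : j ≠ i := Finset.ne_of_mem_erase (hT0sub hjT)
            refine ⟨j, Finset.mem_insert_of_mem hjT, ?_⟩
            rwa [Function.update_of_ne hne]
      · -- coverage for the recursive call
        intro q hq
        rcases hcov hq with h | h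
        · exact Or.inl (Or.inl h)
        · obtain ⟨j, hjS, hqA⟩ := Set.mem_iUnion₂.mp h
          by_cases hji : j = i
          · exact Or.inl (Or.inr (hji ▸ hqA))
          · exact Or.inr (Set.mem_iUnion₂.mpr ⟨j, Finset.mem_erase.mpr ⟨hji, hjS⟩, hqA⟩)
      · -- invariant maintenance
        intro j hj hjpos'
        have hjS : j ∈ S := Finset.mem_of_mem_erase hj
        have hjpos : 0 < volume (A j \ W) := by
          refine lt_of_lt_of_le hjpos' (measure_mono ?_)
          exact Set.diff_subset_diff_right Set.subset_union_left
        by_cases hgc : gpos (x i) (y i) (r i) D ≤ gpos (x j) (y j) (r j) D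
        · -- keep the old certificate
          obtain ⟨V2, σ2, hV2m, hV2W, hσ2lb, hV2vol, hWV2, hii2⟩ := hINV j hjS hjpos
          refine ⟨V2, σ2, hV2m, hV2W.trans Set.subset_union_left, hσ2lb, hV2vol, ?_, ?_⟩
          · intro q hq
            rcases hq.1 with h | h
            · exact hWV2 ⟨h, hq.2⟩
            · have h1 := (hAsub i hiS h).1
              have h2 := (hAsub i hiS h).2
              constructor
              · exact le_trans (hii2 i hiS hipos hgc) (max_le h1.1 h2.1)
              · exact le_min (h1.2.trans hgc) h2.2
          · intro u hu hupos hgu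
            have huS : u ∈ S := Finset.mem_of_mem_erase hu
            have hupos2 : 0 < volume (A u \ W) := by
              refine lt_of_lt_of_le hupos (measure_mono ?_)
              exact Set.diff_subset_diff_right Set.subset_union_left
            exact hii2 u huS hupos2 hgu
        · -- new era: j was not a candidate (its lpos is beyond t + rmax)
          push_neg at hgc
          refine ⟨W', t, hW'm, subset_rfl, by linarith, ?_, by simp, ?_⟩
          · calc volume W' ≤ volume W + volume (A i \ W) := hW'le
            _ ≤ ENNReal.ofReal t + ENNReal.ofReal (2 * rmax) := by
                  rw [hWvol]
                  gcongr
                  exact ((measure_mono Set.diff_subset).trans (hAvol i hiS)).trans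
                    (ENNReal.ofReal_le_ofReal (by linarith [hrub i]))
            _ = ENNReal.ofReal (t + 2 * rmax) := (ENNReal.ofReal_add ht0 (by linarith)).symm
          · intro u hu hupos hgu
            have huS : u ∈ S := Finset.mem_of_mem_erase hu
            have hupos2 : 0 < volume (A u \ W) := by
              refine lt_of_lt_of_le hupos (measure_mono ?_)
              exact Set.diff_subset_diff_right Set.subset_union_left
            have hunotc : t + rmax < lpos (x u) (y u) (r u) D := by
              by_contra hcon
              push_neg at hcon
              have huC : u ∈ C := Finset.mem_filter.mpr ⟨huS, hupos2, hcon⟩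
              have h5 := hgmin u huC
              linarith
            have h1 : max (t + rmax) 0 = t + rmax := max_eq_left (by linarith)
            rw [h1]
            exact le_trans hunotc.le (le_max_left _ _)
    · -- done: t' = M, single sensor covers [t, M]
      push_neg at hter
      have ht'M' : t' = M := le_antisymm ht'M hter
      refine ⟨{i}, fun _ => pi, Finset.singleton_subset_iff.mpr hiS, ?_, ?_⟩
      · intro j hj
        rw [Finset.mem_singleton] at hj
        subst hj
        exact hmove
      · intro q hq
        exact ⟨i, Finset.mem_singleton_self _, hslotcov q ⟨hq.1, by rw [ht'M']; exact hq.2⟩⟩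

/-- If for each sensor `i` with `|yᵢ| ≤ D` there is a measurable set
`Aᵢ ⊆ [lᵢ(D), gᵢ(D)] ∩ [0, M]` of measure at most `2rᵢ` whose union contains `[0, M]`,
then the instance is feasible with respect to `D + r_max`. -/
theorem stmt_6 {n : ℕ} (x y r : Fin n → ℝ) (M : ℝ) (hM : 0 < M)
    (hr : ∀ i, 0 < r i) (D : ℝ) (hD : 0 ≤ D)
    (rmax : ℝ) (hrmax : IsGreatest (Set.range r) rmax)
    (A : Fin n → Set ℝ)
    (hA : ∀ i, |y i| ≤ D →
      MeasurableSet (A i) ∧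
      A i ⊆ Set.Icc (lpos (x i) (y i) (r i) D) (gpos (x i) (y i) (r i) D) ∩
        Set.Icc (0 : ℝ) M ∧
      volume (A i) ≤ ENNReal.ofReal (2 * r i))
    (hcover : Set.Icc (0 : ℝ) M ⊆ ⋃ i, ⋃ (_ : |y i| ≤ D), A i) :
    Feasible x y r M (D + rmax) := by
  obtain ⟨i0, hi0⟩ := hrmax.1
  have hrm0 : 0 < rmax := hi0 ▸ hr i0
  have hrub : ∀ i, r i ≤ rmax := fun i => hrmax.2 ⟨i, rfl⟩
  set S0 : Finset (Fin n) := Finset.univ.filter (fun i => |y i| ≤ D) with hS0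
  have hSy : ∀ j ∈ S0, |y j| ≤ D := fun j hj => (Finset.mem_filter.mp hj).2
  have hcore := mmsm_core x y r M D rmax hr hD hrm0 hrub A S0.card S0 ∅ le_rfl hSy
    MeasurableSet.empty (Set.empty_subset _)
    (fun j hj => (hA j (hSy j hj)).1)
    (fun j hj => (hA j (hSy j hj)).2.1)
    (fun j hj => (hA j (hSy j hj)).2.2)
    ?_ ?_ ?_
  · obtain ⟨T, p, hTsub, hmov, hcovT⟩ := hcore
    refine ⟨T, p, hmov, ?_⟩
    intro q hq
    have h0 : (volume (∅ : Set ℝ)).toReal = 0 := by simp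
    exact hcovT q ⟨by rw [h0]; exact hq.1, hq.2⟩
  · -- coverage
    intro q hq
    have h := hcover hq
    obtain ⟨i, hrest⟩ := Set.mem_iUnion.mp h
    obtain ⟨hyi, hqA⟩ := Set.mem_iUnion.mp hrest
    exact Or.inr (Set.mem_iUnion₂.mpr
      ⟨i, Finset.mem_filter.mpr ⟨Finset.mem_univ _, hyi⟩, hqA⟩)
  · -- initial invariant
    intro j hj hjpos
    refine ⟨∅, -rmax, MeasurableSet.empty, subset_rfl, le_rfl, by simp, by simp, ?_⟩
    intro u hu hupos hgu
    simp only [neg_add_cancel]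
    rw [max_self]
    exact le_max_right _ _
  · show (volume (∅ : Set ℝ)).toReal < M
    simpa using hM
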